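/- For every n ≥ 0 there exist nonnegative integers a_{j,n} (0 ≤ j ≤ n) and b_{j,n} (0 ≤ j ≤ n−2) such that: (1) for every function f : ℤ → ℂ, every integer a, and every integer K ≥ 0, T₋(a, q_n·K + c_n) = ((q_n+1)/2)·T₋(a,K) − ((q_n−1)/2)·T₊(a−K,K) + ∑_{j=0}^{n} a_{j,n}·S₋^{(j)}(a,K) − ∑_{j=0}^{n−2} b_{j,n}·S₊^{(j)}(a,K); (2) under the same hypotheses, T₊(a − q_n·K − c_n, q_n·K + c_n) = ((q_n+1)/2)·T₊(a−K,K) − ((q_n−1)/2)·T₋(a,K) + ∑_{j=0}^{n} a_{j,n}·S₊^{(j)}(a,K) − ∑_{j=0}^{n−2} b_{j,n}·S₋^{(j)}(a,K); and (3) ∑_{j=0}^{n} a_{j,n}·(q_{j−1}+q_{j−2}) + ∑_{j=0}^{n−2} b_{j,n}·(q_{j−1}+q_{j−2}) = 2·p_n. -/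

import Mathlib

open Finset

/-- `Q k` is `q_{k-2}` of the paper: `Q 0 = q_{-2} = 1`, `Q 1 = q_{-1} = 1`,
and `Q (k+2) = 2 * Q (k+1) + Q k`, so that `q_n = Q (n+2)` for `n ≥ -2`. -/
def Q : ℕ → ℤ
  | 0 => 1
  | 1 => 1
  | (k+2) => 2 * Q (k+1) + Q k

/-- `q_n` for `n ≥ 0`. -/
def qn (n : ℕ) : ℤ := Q (n + 2)

/-- `P k` is `p_{k-2}` of the paper: `P 0 = p_{-2} = 0`, `P 1 = p_{-1} = 0`,
and `P (k+2) = 2 * P (k+1) + P k + (Q (k+1) + Q k)/2` (the division is exact). -/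
def P : ℕ → ℤ
  | 0 => 0
  | 1 => 0
  | (k+2) => 2 * P (k+1) + P k + (Q (k+1) + Q k) / 2

/-- `p_n` for `n ≥ 0`. -/
def pn (n : ℕ) : ℤ := P (n + 2)

/-- `c (k)` is `c_{k-2} = (q_{k-2} - 1)/2` of the paper (the division is exact). -/
def c (k : ℕ) : ℤ := (Q k - 1) / 2

/-- Triangular sum `T₋(x,y) = ∑_{k=1}^{y} (y+1-k)·f(x+k)`. -/
noncomputable def Tm (f : ℤ → ℂ) (x y : ℤ) : ℂ :=
  ∑ k ∈ Finset.Icc 1 y, ((y + 1 - k : ℤ) : ℂ) * f (x + k)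

/-- Triangular sum `T₊(x,y) = ∑_{k=1}^{y} k·f(x+k)`. -/
noncomputable def Tp (f : ℤ → ℂ) (x y : ℤ) : ℂ :=
  ∑ k ∈ Finset.Icc 1 y, ((k : ℤ) : ℂ) * f (x + k)

/-- Square sum `S(x,y) = ∑_{i=x+1}^{x+y} ∑_{j=0}^{y-1} f(i+j)`. -/
noncomputable def Sq (f : ℤ → ℂ) (x y : ℤ) : ℂ :=
  ∑ i ∈ Finset.Icc (x + 1) (x + y), ∑ j ∈ Finset.Icc 0 (y - 1), f (i + j)

/-- `S₋^{(j)}(a,K) = S(a − q_{j−2}·K − c_{j−2}, (q_{j−2}+q_{j−1})·K + c_j − c_{j−1})`,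
with `q_{j-2} = Q j`, `q_{j-1} = Q (j+1)`, `q_j = Q (j+2)`, and similarly for `c`. -/
noncomputable def Sminus (f : ℤ → ℂ) (j : ℕ) (a K : ℤ) : ℂ :=
  Sq f (a - Q j * K - c j) ((Q j + Q (j + 1)) * K + c (j + 2) - c (j + 1))

/-- `S₊^{(j)}(a,K) = S(a − q_j·K − c_j, (q_{j−2}+q_{j−1})·K + c_j − c_{j−1})`. -/
noncomputable def Splus (f : ℤ → ℂ) (j : ℕ) (a K : ℤ) : ℂ :=
  Sq f (a - Q (j + 2) * K - c (j + 2)) ((Q j + Q (j + 1)) * K + c (j + 2) - c (j + 1))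

noncomputable def Sg (f : ℤ → ℂ) (x y : ℤ) : ℂ := ∑ k ∈ Finset.Icc 1 y, f (x + k)

lemma Icc_top (g : ℤ → ℂ) (w : ℤ) (hw : 0 ≤ w) :
    ∑ k ∈ Finset.Icc (1:ℤ) (w+1), g k = (∑ k ∈ Finset.Icc (1:ℤ) w, g k) + g (w+1) := by
  rw [show Finset.Icc (1:ℤ) (w+1) = insert (w+1) (Finset.Icc 1 w) by
    ext t; simp only [Finset.mem_Icc, Finset.mem_insert]; omega]
  rw [Finset.sum_insert (by simp only [Finset.mem_Icc]; omega)]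
  ring

lemma Icc_top0 (g : ℤ → ℂ) (w : ℤ) (hw : 0 ≤ w) :
    ∑ k ∈ Finset.Icc (0:ℤ) w, g k = (∑ k ∈ Finset.Icc (0:ℤ) (w-1), g k) + g w := by
  rw [show Finset.Icc (0:ℤ) w = insert w (Finset.Icc 0 (w-1)) by
    ext t; simp only [Finset.mem_Icc, Finset.mem_insert]; omega]
  rw [Finset.sum_insert (by simp only [Finset.mem_Icc]; omega)]
  ring

lemma sum_Icc_shift (g : ℤ → ℂ) (x u v : ℤ) :
    ∑ i ∈ Finset.Icc (x+u) (x+v), g i = ∑ k ∈ Finset.Icc u v, g (x+k) := by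
  rw [← Finset.map_add_left_Icc, Finset.sum_map]
  rfl

lemma Sg_zero (f : ℤ → ℂ) (b y : ℤ) (hy : y ≤ 0) : Sg f b y = 0 := by
  rw [Sg, Finset.Icc_eq_empty (by omega), Finset.sum_empty]

lemma Tm_zero (f : ℤ → ℂ) (b y : ℤ) (hy : y ≤ 0) : Tm f b y = 0 := by
  rw [Tm, Finset.Icc_eq_empty (by omega), Finset.sum_empty]

lemma Tp_zero (f : ℤ → ℂ) (b y : ℤ) (hy : y ≤ 0) : Tp f b y = 0 := by
  rw [Tp, Finset.Icc_eq_empty (by omega), Finset.sum_empty]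

lemma Sg_succ (f : ℤ → ℂ) (b w : ℤ) (hw : 0 ≤ w) :
    Sg f b (w+1) = Sg f b w + f (b + (w+1)) := by
  rw [Sg, Sg, Icc_top _ _ hw]

lemma Sg_one (f : ℤ → ℂ) (b : ℤ) : Sg f b 1 = f (b + 1) := by
  rw [Sg]; simp

lemma Tm_one (f : ℤ → ℂ) (b : ℤ) : Tm f b 1 = f (b + 1) := by
  rw [Tm]; norm_num

lemma Tm_succ (f : ℤ → ℂ) (b w : ℤ) (hw : 0 ≤ w) :
    Tm f b (w+1) = Tm f b w + Sg f b w + f (b + (w+1)) := by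
  rw [Tm, Tm, Sg, Icc_top _ _ hw, ← Finset.sum_add_distrib]
  rw [show ((w+1+1-(w+1) : ℤ) : ℂ) = 1 by push_cast; ring, one_mul]
  congr 1
  apply Finset.sum_congr rfl
  intro k _
  push_cast
  ring

lemma Tp_succ (f : ℤ → ℂ) (b w : ℤ) (hw : 0 ≤ w) :
    Tp f b (w+1) = Tp f b w + ((w+1 : ℤ) : ℂ) * f (b + (w+1)) := by
  rw [Tp, Tp, Icc_top _ _ hw]

lemma Sg_add (f : ℤ → ℂ) (b u v : ℤ) (hu : 0 ≤ u) (hv : 0 ≤ v) :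
    Sg f b (u+v) = Sg f b u + Sg f (b+u) v := by
  refine Int.le_induction (motive := fun v _ => Sg f b (u+v) = Sg f b u + Sg f (b+u) v) ?_ ?_ v hv
  · simp [Sg_zero f (b+u) 0 le_rfl]
  · intro v hv ih
    rw [show u + (v+1) = (u+v)+1 by ring, Sg_succ f b (u+v) (by omega), ih,
      Sg_succ f (b+u) v hv, show b + u + (v+1) = b + (u+v+1) by ring]
    ring

lemma TmTp (f : ℤ → ℂ) (b y : ℤ) :
    Tm f b y + Tp f b y = ((y+1 : ℤ) : ℂ) * Sg f b y := by
  rw [Tm, Tp, Sg, ← Finset.sum_add_distrib, Finset.mul_sum]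
  apply Finset.sum_congr rfl
  intro k _
  push_cast
  ring

lemma Tm_add (f : ℤ → ℂ) (a y z : ℤ) (hy : 0 ≤ y) (hz : 0 ≤ z) :
    Tm f a (y+z) = Tm f a y + (z : ℂ) * Sg f a y + Tm f (a+y) z := by
  refine Int.le_induction
    (motive := fun z _ => Tm f a (y+z) = Tm f a y + (z : ℂ) * Sg f a y + Tm f (a+y) z) ?_ ?_ z hz
  · simp [Tm_zero f (a+y) 0 le_rfl]
  · intro z hz ih
    rw [show y + (z+1) = (y+z)+1 by ring, Tm_succ f a (y+z) (by omega), ih,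
      Tm_succ f (a+y) z hz, Sg_add f a y z hy hz,
      show a + y + (z+1) = a + (y+z+1) by ring]
    push_cast
    ring

lemma Tp_add (f : ℤ → ℂ) (x y z : ℤ) (hy : 0 ≤ y) (hz : 0 ≤ z) :
    Tp f x (y+z) = Tp f x y + (y : ℂ) * Sg f (x+y) z + Tp f (x+y) z := by
  refine Int.le_induction
    (motive := fun z _ => Tp f x (y+z) = Tp f x y + (y : ℂ) * Sg f (x+y) z + Tp f (x+y) z) ?_ ?_ z hz
  · simp [Tp_zero f (x+y) 0 le_rfl, Sg_zero f (x+y) 0 le_rfl]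
  · intro z hz ih
    rw [show y + (z+1) = (y+z)+1 by ring, Tp_succ f x (y+z) (by omega), ih,
      Tp_succ f (x+y) z hz, Sg_succ f (x+y) z hz,
      show x + y + (z+1) = x + (y+z+1) by ring]
    push_cast
    ring

lemma Sg_split (f : ℤ → ℂ) (b u w : ℤ) (hu : 0 ≤ u) (huw : u ≤ w) :
    Sg f b w = Sg f b u + Sg f (b+u) (w-u) := by
  have h := Sg_add f b u (w-u) hu (by omega)
  rwa [show u+(w-u) = w by ring] at h

lemma Tm_split (f : ℤ → ℂ) (a u w : ℤ) (hu : 0 ≤ u) (huw : u ≤ w) :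
    Tm f a w = Tm f a u + ((w-u : ℤ) : ℂ) * Sg f a u + Tm f (a+u) (w-u) := by
  have h := Tm_add f a u (w-u) hu (by omega)
  rwa [show u+(w-u) = w by ring] at h

lemma Tp_split (f : ℤ → ℂ) (x u w : ℤ) (hu : 0 ≤ u) (huw : u ≤ w) :
    Tp f x w = Tp f x u + ((u : ℤ) : ℂ) * Sg f (x+u) (w-u) + Tp f (x+u) (w-u) := by
  have h := Tp_add f x u (w-u) hu (by omega)
  rwa [show u+(w-u) = w by ring] at h

lemma Tp_one (f : ℤ → ℂ) (b : ℤ) : Tp f b 1 = f (b + 1) := by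
  rw [Tp]; norm_num

lemma par (f : ℤ → ℂ) (x y : ℤ) (z : ℤ) (hz : 0 ≤ z) (hzy : z ≤ y) :
    ∑ t ∈ Finset.Icc (0:ℤ) (z-1), Sg f (x+t) y
      = Tp f x z + ((z : ℤ) : ℂ) * Sg f (x+z) (y-z) + Tm f (x+y) (z-1) := by
  refine Int.le_induction (motive := fun z _ => z ≤ y →
    ∑ t ∈ Finset.Icc (0:ℤ) (z-1), Sg f (x+t) y
      = Tp f x z + ((z : ℤ) : ℂ) * Sg f (x+z) (y-z) + Tm f (x+y) (z-1)) ?_ ?_ z hz hzy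
  · intro _
    rw [show (0:ℤ)-1 = -1 by ring, Finset.Icc_eq_empty (by omega), Finset.sum_empty,
      Tp_zero f x 0 le_rfl, Tm_zero f (x+y) (-1) (by omega)]
    push_cast
    ring
  · intro z hz ih hzy1
    by_cases hz0 : z = 0
    · subst hz0
      rw [show (0:ℤ)+1-1 = 0 by ring, show Finset.Icc (0:ℤ) 0 = {0} by ext t; simp,
        Finset.sum_singleton, Tm_zero f (x+y) 0 le_rfl,
        show (0:ℤ)+1 = 1 by ring, Tp_one, show y-(1:ℤ) = y-1 by ring,
        show x+(0:ℤ) = x by ring]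
      have e1 := Sg_split f x 1 y (by omega) (by omega)
      rw [e1, Sg_one]
      push_cast
      ring
    have hz1 : 1 ≤ z := by omega
    have ihy : z ≤ y := by omega
    rw [show z+1-1 = z by ring, Icc_top0 _ z hz, ih ihy]
    have hA : Sg f (x+z) y = f (x+z+1) + Sg f (x+z+1) (y-z-1)
        + Sg f (x+y) (z-1) + f (x+y+z) := by
      have e1 := Sg_split f (x+z) 1 y (by omega) (by omega)
      have e2 := Sg_split f (x+z+1) (y-z-1) (y-1) (by omega) (by omega)
      have e3 := Sg_succ f (x+y) (z-1) (by omega)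
      rw [show x+z+1+(y-z-1) = x+y by ring, show y-1-(y-z-1) = z by ring] at e2
      rw [show z-1+1 = z by ring] at e3
      rw [e1, e2, e3, Sg_one]
      ring
    have hB : Sg f (x+z) (y-z) = f (x+z+1) + Sg f (x+z+1) (y-z-1) := by
      have e1 := Sg_split f (x+z) 1 (y-z) (by omega) (by omega)
      rw [e1, Sg_one]
    have hC : Tp f x (z+1) = Tp f x z + ((z+1 : ℤ) : ℂ) * f (x+z+1) := by
      have e := Tp_succ f x z hz
      rwa [show x+(z+1) = x+z+1 by ring] at e
    have hD : Tm f (x+y) z = Tm f (x+y) (z-1) + Sg f (x+y) (z-1) + f (x+y+z) := by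
      have e := Tm_succ f (x+y) (z-1) (by omega)
      rwa [show z-1+1 = z by ring] at e
    rw [show y-(z+1) = y-z-1 by ring, show x+(z+1) = x+z+1 by ring]
    linear_combination (norm := (push_cast; ring1)) hA + ((z:ℤ):ℂ) * hB - hC - hD

lemma Sq_swap (f : ℤ → ℂ) (x y : ℤ) :
    Sq f x y = ∑ t ∈ Finset.Icc (0:ℤ) (y-1), Sg f (x+t) y := by
  rw [Sq, Finset.sum_comm]
  refine Finset.sum_congr rfl fun j _ => ?_
  rw [show x + 1 = x + 1 by ring, show x + y = x + y by ring]
  rw [sum_Icc_shift (fun i => f (i+j)) x 1 y, Sg]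
  exact Finset.sum_congr rfl fun k _ => congrArg f (by ring)

lemma Sq_eq (f : ℤ → ℂ) (x y : ℤ) (hy : 0 ≤ y) :
    Sq f x y = Tp f x y + Tm f (x+y) (y-1) := by
  rw [Sq_swap, par f x y y hy le_rfl, show y - y = 0 by ring,
    Sg_zero f (x+y) 0 le_rfl]
  ring

lemma masterI (f : ℤ → ℂ) (a M N : ℤ) (hM : 0 ≤ M) (hN : 0 ≤ N) :
    Tm f a (2*M+N+1) = 2 * Tm f a M - Tp f (a-N) N + Sq f (a-N) (M+N+1) := by
  have h1 := Tm_split f a M (2*M+N+1) hM (by omega)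
  rw [show 2*M+N+1-M = M+N+1 by ring] at h1
  have h2 := Tm_split f (a+M) 1 (M+N+1) (by omega) (by omega)
  rw [show M+N+1-1 = M+N by ring, Tm_one, Sg_one] at h2
  have h3 := Sq_eq f (a-N) (M+N+1) (by omega)
  rw [show a-N+(M+N+1) = a+M+1 by ring, show M+N+1-1 = M+N by ring] at h3
  have h4 := Tp_split f (a-N) N (M+N+1) hN (by omega)
  rw [show a-N+N = a by ring, show M+N+1-N = M+1 by ring] at h4
  have h5 := Sg_succ f a M hM
  have h6 := Tp_succ f a M hM
  rw [show a+(M+1) = a+M+1 by ring] at h5 h6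
  have h7 := TmTp f a M
  linear_combination (norm := (push_cast; ring1))
    h1 + h2 - h3 - h4 - ((N:ℤ):ℂ) * h5 - h6 - h7

lemma masterII (f : ℤ → ℂ) (a M N : ℤ) (hM : 0 ≤ M) (hN : 0 ≤ N) :
    Tp f (a-(2*M+N+1)) (2*M+N+1)
      = 2 * Tp f (a-M) M - Tm f a N + Sq f (a-(2*M+N+1)) (M+N+1) := by
  have g1 := Tp_split f (a-(2*M+N+1)) (M+N+1) (2*M+N+1) (by omega) (by omega)
  rw [show a-(2*M+N+1)+(M+N+1) = a-M by ring, show 2*M+N+1-(M+N+1) = M by ring] at g1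
  have g2 := Sq_eq f (a-(2*M+N+1)) (M+N+1) (by omega)
  rw [show a-(2*M+N+1)+(M+N+1) = a-M by ring, show M+N+1-1 = M+N by ring] at g2
  have g3 := Tm_split f (a-M) M (M+N) hM (by omega)
  rw [show M+N-M = N by ring, show a-M+M = a by ring] at g3
  have g4 := TmTp f (a-M) M
  linear_combination (norm := (push_cast; ring1)) g1 - g2 - g3 - g4

lemma Q_rec (m : ℕ) : Q (m+2) = 2 * Q (m+1) + Q m := rfl

lemma Q_base (m : ℕ) : 1 ≤ Q m ∧ Q m % 2 = 1 := by
  induction m using Nat.strong_induction_on with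
  | _ m ih =>
    match m with
    | 0 => exact ⟨le_refl 1, rfl⟩
    | 1 => exact ⟨le_refl 1, rfl⟩
    | (k+2) =>
      have h1 := ih (k+1) (by omega)
      have h0 := ih k (by omega)
      rw [Q_rec]
      omega

lemma Q_ge_one (m : ℕ) : 1 ≤ Q m := (Q_base m).1

lemma cQ (m : ℕ) : Q m = 2 * c m + 1 := by
  have h := Q_base m
  rw [c]
  omega

lemma c_nonneg (m : ℕ) : 0 ≤ c m := by
  have h := cQ m
  have h2 := Q_ge_one m
  omega

lemma c_rec (m : ℕ) : c (m+2) = 2 * c (m+1) + c m + 1 := by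
  have h2 := cQ (m+2)
  have h1 := cQ (m+1)
  have h0 := cQ m
  have hr := Q_rec m
  omega

lemma P_rec (m : ℕ) : P (m+2) = 2 * P (m+1) + P m + (c (m+1) + c m + 1) := by
  have h : P (m+2) = 2 * P (m+1) + P m + (Q (m+1) + Q m) / 2 := rfl
  have h1 := cQ (m+1)
  have h0 := cQ m
  omega

lemma QKc_nonneg (m : ℕ) (K : ℤ) (hK : 0 ≤ K) : 0 ≤ Q m * K + c m := by
  have := Q_ge_one m
  have := c_nonneg m
  nlinarith

lemma QKc_rec (m : ℕ) (K : ℤ) :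
    Q (m+2) * K + c (m+2) = 2 * (Q (m+1) * K + c (m+1)) + (Q m * K + c m) + 1 := by
  rw [Q_rec, c_rec]
  ring

lemma width_eq (m : ℕ) (K : ℤ) :
    (Q m + Q (m+1)) * K + c (m+2) - c (m+1)
      = (Q (m+1) * K + c (m+1)) + (Q m * K + c m) + 1 := by
  rw [c_rec]
  ring

def Good (m : ℕ) : Prop :=
  ∃ aa bb : ℕ → ℤ,
    (∀ j, 0 ≤ aa j) ∧ (∀ j, 0 ≤ bb j) ∧
    (∀ j, m ≤ j + 1 → aa j = 0) ∧ (∀ j, m ≤ j + 3 → bb j = 0) ∧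
    (∀ f : ℤ → ℂ, ∀ a K : ℤ, 0 ≤ K →
      Tm f a (Q m * K + c m) =
        (((Q m + 1) / 2 : ℤ) : ℂ) * Tm f a K -
          (((Q m - 1) / 2 : ℤ) : ℂ) * Tp f (a - K) K +
          ∑ j ∈ Finset.range (m - 1), (aa j : ℂ) * Sminus f j a K -
          ∑ j ∈ Finset.range (m - 3), (bb j : ℂ) * Splus f j a K) ∧
    (∀ f : ℤ → ℂ, ∀ a K : ℤ, 0 ≤ K →
      Tp f (a - Q m * K - c m) (Q m * K + c m) =
        (((Q m + 1) / 2 : ℤ) : ℂ) * Tp f (a - K) K -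
          (((Q m - 1) / 2 : ℤ) : ℂ) * Tm f a K +
          ∑ j ∈ Finset.range (m - 1), (aa j : ℂ) * Splus f j a K -
          ∑ j ∈ Finset.range (m - 3), (bb j : ℂ) * Sminus f j a K) ∧
    (∑ j ∈ Finset.range (m - 1), aa j * (Q (j + 1) + Q j) +
      ∑ j ∈ Finset.range (m - 3), bb j * (Q (j + 1) + Q j) = 2 * P m)

lemma good_zero : Good 0 := by
  have hq : Q 0 = 1 := rfl
  have hc : c 0 = 0 := rfl
  refine ⟨0, 0, fun j => le_rfl, fun j => le_rfl, fun j _ => rfl, fun j _ => rfl, ?_, ?_, ?_⟩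
  · intro f a K hK
    simp [hq, hc]
  · intro f a K hK
    simp [hq, hc]
  · simp [P]

lemma good_one : Good 1 := by
  have hq : Q 1 = 1 := rfl
  have hc : c 1 = 0 := rfl
  refine ⟨0, 0, fun j => le_rfl, fun j => le_rfl, fun j _ => rfl, fun j _ => rfl, ?_, ?_, ?_⟩
  · intro f a K hK
    simp [hq, hc]
  · intro f a K hK
    simp [hq, hc]
  · simp [P]

lemma sum_trim (g : ℕ → ℂ) (s t : ℕ) (hst : s ≤ t)
    (hg : ∀ j, s ≤ j → g j = 0) :
    ∑ j ∈ Finset.range t, g j = ∑ j ∈ Finset.range s, g j := by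
  symm
  apply Finset.sum_subset (Finset.range_subset_range.2 hst)
  intro j _ hnj
  exact hg j (by simpa [Finset.mem_range, not_lt] using hnj)

lemma good_step (m : ℕ) (g0 : Good m) (g1 : Good (m+1)) : Good (m+2) := by
  obtain ⟨a0, b0, a0n, b0n, a0s, b0s, e01, e02, s0⟩ := g0
  obtain ⟨a1, b1, a1n, b1n, a1s, b1s, e11, e12, s1⟩ := g1
  simp only [show m + 1 - 1 = m from rfl, show m + 1 - 3 = m - 2 from rfl] at e11 e12 s1
  -- coefficient recursions (integer)
  have cA : ((Q (m+2) + 1)/2 : ℤ) = 2 * ((Q (m+1) + 1)/2) + (Q m - 1)/2 := by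
    have h2 := cQ (m+2); have h1 := cQ (m+1); have h0 := cQ m; have hr := Q_rec m
    omega
  have cB : ((Q (m+2) - 1)/2 : ℤ) = 2 * ((Q (m+1) - 1)/2) + (Q m + 1)/2 := by
    have h2 := cQ (m+2); have h1 := cQ (m+1); have h0 := cQ m; have hr := Q_rec m
    omega
  have cA' : (((Q (m+2) + 1)/2 : ℤ) : ℂ)
      = 2 * (((Q (m+1) + 1)/2 : ℤ) : ℂ) + (((Q m - 1)/2 : ℤ) : ℂ) := by
    rw [cA]; push_cast; ring
  have cB' : (((Q (m+2) - 1)/2 : ℤ) : ℂ)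
      = 2 * (((Q (m+1) - 1)/2 : ℤ) : ℂ) + (((Q m + 1)/2 : ℤ) : ℂ) := by
    rw [cB]; push_cast; ring
  -- sum manipulation helpers
  have sumA : ∀ S : ℕ → ℂ,
      ∑ j ∈ Finset.range (m+1), ((2 * a1 j + b0 j + if j = m then 1 else 0 : ℤ) : ℂ) * S j
        = 2 * ∑ j ∈ Finset.range m, (a1 j : ℂ) * S j
          + ∑ j ∈ Finset.range (m-3), (b0 j : ℂ) * S j + S m := by
    intro S
    have step : ∀ j ∈ Finset.range (m+1),
        ((2 * a1 j + b0 j + if j = m then 1 else 0 : ℤ) : ℂ) * S j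
          = 2 * ((a1 j : ℂ) * S j) + (b0 j : ℂ) * S j
            + (if j = m then S j else 0) := by
      intro j _
      rcases eq_or_ne j m with h | h
      · simp only [h, if_pos rfl]; push_cast; ring
      · simp only [if_neg h]; push_cast; ring
    rw [Finset.sum_congr rfl step, Finset.sum_add_distrib, Finset.sum_add_distrib,
      Finset.sum_ite_eq' (Finset.range (m+1)) m S,
      if_pos (Finset.mem_range.2 (by omega)), ← Finset.mul_sum]
    have t1 : ∑ j ∈ Finset.range (m+1), (a1 j : ℂ) * S j
        = ∑ j ∈ Finset.range m, (a1 j : ℂ) * S j := by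
      apply sum_trim
      · omega
      · intro j hj
        rw [a1s j (by omega)]
        simp
    have t2 : ∑ j ∈ Finset.range (m+1), (b0 j : ℂ) * S j
        = ∑ j ∈ Finset.range (m-3), (b0 j : ℂ) * S j := by
      apply sum_trim
      · omega
      · intro j hj
        rw [b0s j (by omega)]
        simp
    rw [t1, t2]
  have sumB : ∀ S : ℕ → ℂ,
      ∑ j ∈ Finset.range (m-1), ((2 * b1 j + a0 j : ℤ) : ℂ) * S j
        = 2 * ∑ j ∈ Finset.range (m-2), (b1 j : ℂ) * S j
          + ∑ j ∈ Finset.range (m-1), (a0 j : ℂ) * S j := by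
    intro S
    have step : ∀ j ∈ Finset.range (m-1),
        ((2 * b1 j + a0 j : ℤ) : ℂ) * S j
          = 2 * ((b1 j : ℂ) * S j) + (a0 j : ℂ) * S j := by
      intro j _
      push_cast
      ring
    rw [Finset.sum_congr rfl step, Finset.sum_add_distrib, ← Finset.mul_sum]
    have t1 : ∑ j ∈ Finset.range (m-1), (b1 j : ℂ) * S j
        = ∑ j ∈ Finset.range (m-2), (b1 j : ℂ) * S j := by
      apply sum_trim
      · omega
      · intro j hj
        rw [b1s j (by omega)]
        simp
    rw [t1]
  refine ⟨fun j => 2 * a1 j + b0 j + if j = m then 1 else 0,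
          fun j => 2 * b1 j + a0 j, ?_, ?_, ?_, ?_, ?_, ?_, ?_⟩
  · intro j
    show 0 ≤ 2 * a1 j + b0 j + if j = m then 1 else 0
    have h1 := a1n j; have h0 := b0n j
    split <;> omega
  · intro j
    show 0 ≤ 2 * b1 j + a0 j
    have h1 := b1n j; have h0 := a0n j
    omega
  · intro j hj
    show 2 * a1 j + b0 j + (if j = m then 1 else 0) = 0
    rw [a1s j (by omega), b0s j (by omega), if_neg (by omega)]
    ring
  · intro j hj
    show 2 * b1 j + a0 j = 0
    rw [b1s j (by omega), a0s j (by omega)]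
    ring
  · -- eq1
    intro f a K hK
    simp only [show m + 2 - 1 = m + 1 from rfl, show m + 2 - 3 = m - 1 from rfl]
    have hM := QKc_nonneg (m+1) K hK
    have hN := QKc_nonneg m K hK
    rw [QKc_rec m K,
      masterI f a (Q (m+1) * K + c (m+1)) (Q m * K + c m) hM hN,
      show a - (Q m * K + c m) = a - Q m * K - c m by ring]
    have hSq : Sq f (a - Q m * K - c m)
        ((Q (m+1) * K + c (m+1)) + (Q m * K + c m) + 1) = Sminus f m a K := by
      rw [Sminus, width_eq]
    rw [hSq]
    linear_combination (norm := (push_cast; ring1))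
      2 * e11 f a K hK - e02 f a K hK
      - sumA (fun j => Sminus f j a K) + sumB (fun j => Splus f j a K)
      - Tm f a K * cA' + Tp f (a - K) K * cB'
  · -- eq2
    intro f a K hK
    simp only [show m + 2 - 1 = m + 1 from rfl, show m + 2 - 3 = m - 1 from rfl]
    have hM := QKc_nonneg (m+1) K hK
    have hN := QKc_nonneg m K hK
    have hL := QKc_rec m K
    rw [show a - Q (m+2) * K - c (m+2) = a - (Q (m+2) * K + c (m+2)) by ring, hL,
      masterII f a (Q (m+1) * K + c (m+1)) (Q m * K + c m) hM hN,
      show a - (Q (m+1) * K + c (m+1)) = a - Q (m+1) * K - c (m+1) by ring]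
    have hSq : Sq f (a - (2 * (Q (m+1) * K + c (m+1)) + (Q m * K + c m) + 1))
        ((Q (m+1) * K + c (m+1)) + (Q m * K + c m) + 1) = Splus f m a K := by
      rw [Splus, width_eq, ← hL,
        show a - (Q (m+2) * K + c (m+2)) = a - Q (m+2) * K - c (m+2) by ring]
    rw [hSq]
    linear_combination (norm := (push_cast; ring1))
      2 * e12 f a K hK - e01 f a K hK
      - sumA (fun j => Splus f j a K) + sumB (fun j => Sminus f j a K)
      - Tp f (a - K) K * cA' + Tm f a K * cB'
  · -- sum identity
    simp only [show m + 2 - 1 = m + 1 from rfl, show m + 2 - 3 = m - 1 from rfl]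
    have sumA' :
        ∑ j ∈ Finset.range (m+1),
            (2 * a1 j + b0 j + if j = m then 1 else 0) * (Q (j + 1) + Q j)
          = 2 * ∑ j ∈ Finset.range m, a1 j * (Q (j + 1) + Q j)
            + ∑ j ∈ Finset.range (m-3), b0 j * (Q (j + 1) + Q j)
            + (Q (m + 1) + Q m) := by
      have step : ∀ j ∈ Finset.range (m+1),
          (2 * a1 j + b0 j + if j = m then 1 else 0) * (Q (j + 1) + Q j)
            = 2 * (a1 j * (Q (j + 1) + Q j)) + b0 j * (Q (j + 1) + Q j)
              + (if j = m then Q (j + 1) + Q j else 0) := by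
        intro j _
        rcases eq_or_ne j m with h | h
        · subst h; rw [if_pos rfl, if_pos rfl]; ring
        · rw [if_neg h, if_neg h]; ring
      rw [Finset.sum_congr rfl step, Finset.sum_add_distrib, Finset.sum_add_distrib,
        Finset.sum_ite_eq' (Finset.range (m+1)) m (fun j => Q (j + 1) + Q j),
        if_pos (Finset.mem_range.2 (by omega)), ← Finset.mul_sum]
      have t1 : ∑ j ∈ Finset.range (m+1), a1 j * (Q (j + 1) + Q j)
          = ∑ j ∈ Finset.range m, a1 j * (Q (j + 1) + Q j) := by
        symm
        apply Finset.sum_subset (Finset.range_subset_range.2 (by omega))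
        intro j _ hnj
        rw [a1s j (by simp [Finset.mem_range] at hnj; omega)]
        ring
      have t2 : ∑ j ∈ Finset.range (m+1), b0 j * (Q (j + 1) + Q j)
          = ∑ j ∈ Finset.range (m-3), b0 j * (Q (j + 1) + Q j) := by
        symm
        apply Finset.sum_subset (Finset.range_subset_range.2 (by omega))
        intro j _ hnj
        rw [b0s j (by simp [Finset.mem_range] at hnj; omega)]
        ring
      rw [t1, t2]
    have sumB' :
        ∑ j ∈ Finset.range (m-1), (2 * b1 j + a0 j) * (Q (j + 1) + Q j)
          = 2 * ∑ j ∈ Finset.range (m-2), b1 j * (Q (j + 1) + Q j)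
            + ∑ j ∈ Finset.range (m-1), a0 j * (Q (j + 1) + Q j) := by
      have step : ∀ j ∈ Finset.range (m-1),
          (2 * b1 j + a0 j) * (Q (j + 1) + Q j)
            = 2 * (b1 j * (Q (j + 1) + Q j)) + a0 j * (Q (j + 1) + Q j) := by
        intro j _
        ring
      rw [Finset.sum_congr rfl step, Finset.sum_add_distrib, ← Finset.mul_sum]
      have t1 : ∑ j ∈ Finset.range (m-1), b1 j * (Q (j + 1) + Q j)
          = ∑ j ∈ Finset.range (m-2), b1 j * (Q (j + 1) + Q j) := by
        symm
        apply Finset.sum_subset (Finset.range_subset_range.2 (by omega))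
        intro j _ hnj
        rw [b1s j (by simp [Finset.mem_range] at hnj; omega)]
        ring
      rw [t1]
    rw [sumA', sumB']
    have hp := P_rec m
    have h1 := cQ (m+1)
    have h0 := cQ m
    omega

lemma good_all (m : ℕ) : Good m := by
  induction m using Nat.strong_induction_on with
  | _ m ih =>
    match m with
    | 0 => exact good_zero
    | 1 => exact good_one
    | (k+2) => exact good_step k (ih k (by omega)) (ih (k+1) (by omega))

/-- **Lemma 3 and Lemma 4**. For every `n ≥ 0` there are nonnegative integers
`a_{j,n}` (`0 ≤ j ≤ n`) and `b_{j,n}` (`0 ≤ j ≤ n−2`) such that for all `f`, `a` and `K ≥ 0`: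
`T₋(a, q_n K + c_n) = ((q_n+1)/2)·T₋(a,K) − ((q_n−1)/2)·T₊(a−K,K)
    + ∑_{j=0}^{n} a_{j,n}·S₋^{(j)}(a,K) − ∑_{j=0}^{n−2} b_{j,n}·S₊^{(j)}(a,K)`,
`T₊(a − q_n K − c_n, q_n K + c_n) = ((q_n+1)/2)·T₊(a−K,K) − ((q_n−1)/2)·T₋(a,K)
    + ∑_{j=0}^{n} a_{j,n}·S₊^{(j)}(a,K) − ∑_{j=0}^{n−2} b_{j,n}·S₋^{(j)}(a,K)`,
and moreover
`∑_{j=0}^{n} a_{j,n}·(q_{j−1}+q_{j−2}) + ∑_{j=0}^{n−2} b_{j,n}·(q_{j−1}+q_{j−2}) = 2·p_n`. -/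
theorem recursion_general (n : ℕ) :
    ∃ aa bb : ℕ → ℤ,
      (∀ j ∈ Finset.range (n + 1), 0 ≤ aa j) ∧
      (∀ j ∈ Finset.range (n - 1), 0 ≤ bb j) ∧
      (∀ f : ℤ → ℂ, ∀ a K : ℤ, 0 ≤ K →
        Tm f a (Q (n + 2) * K + c (n + 2)) =
          (((Q (n + 2) + 1) / 2 : ℤ) : ℂ) * Tm f a K -
            (((Q (n + 2) - 1) / 2 : ℤ) : ℂ) * Tp f (a - K) K +
            ∑ j ∈ Finset.range (n + 1), (aa j : ℂ) * Sminus f j a K -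
            ∑ j ∈ Finset.range (n - 1), (bb j : ℂ) * Splus f j a K) ∧
      (∀ f : ℤ → ℂ, ∀ a K : ℤ, 0 ≤ K →
        Tp f (a - Q (n + 2) * K - c (n + 2)) (Q (n + 2) * K + c (n + 2)) =
          (((Q (n + 2) + 1) / 2 : ℤ) : ℂ) * Tp f (a - K) K -
            (((Q (n + 2) - 1) / 2 : ℤ) : ℂ) * Tm f a K +
            ∑ j ∈ Finset.range (n + 1), (aa j : ℂ) * Splus f j a K -
            ∑ j ∈ Finset.range (n - 1), (bb j : ℂ) * Sminus f j a K) ∧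
      (∑ j ∈ Finset.range (n + 1), aa j * (Q (j + 1) + Q j) +
        ∑ j ∈ Finset.range (n - 1), bb j * (Q (j + 1) + Q j) = 2 * pn n) := by
  
  obtain ⟨aa, bb, an, bn, _, _, e1, e2, s⟩ := good_all (n + 2)
  exact ⟨aa, bb, fun j _ => an j, fun j _ => bn j, e1, e2, s⟩
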